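/- Let g_I be defined by the iterated residue formula g_I(α₁,…,α_k;β₁,…,β_l) = Res_{z₁=0,∞}⋯Res_{z_r=0,∞}( ∏_j (1-z_j)^{I_j-j} ∏_{i>j}(1-z_i/z_j) M(z) ) with M as in the paper. If the last entry p of the sequence (I,p) satisfies p ≤ 0, then g_{I,p} = g_I. The key computation is: Res_{z_r=0} [ (1-z_r)^{p-r} ∏_{i=1}^{r-1}(1 - z_r/z_i) · ∏_{i=1}^l (1-z_rβ_i)/(∏_{i=1}^k(1-z_rα_i)(1-z_r)^{l-k}) · dz_r/z_r ] = 1, while the residue of the same form at z_r = ∞ vanishes (for p ≤ 0). -/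

import Mathlib

open Finset

/-- The residue of `f` at the point `a`, defined as the limit as `ε → 0⁺` of
`(2πi)⁻¹ ∮_{|z-a|=ε} f`. -/
noncomputable def residue (f : ℂ → ℂ) (a : ℂ) : ℂ :=
  Filter.limUnder (nhdsWithin (0 : ℝ) (Set.Ioi 0))
    (fun ε => (2 * (Real.pi : ℂ) * Complex.I)⁻¹ * circleIntegral f a ε)

/-- The residue of the 1-form `f(z) dz` at `z = ∞`:
`Res_{z=∞} f dz = - Res_{w=0} f(1/w)/w² dw`. -/
noncomputable def resInf (f : ℂ → ℂ) : ℂ :=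
  - residue (fun w => f w⁻¹ * (w ^ 2)⁻¹) 0

/-- Sum of the residues of `f(z) dz` at `z = 0` and `z = ∞`. -/
noncomputable def res0inf (f : ℂ → ℂ) : ℂ :=
  residue f 0 + resInf f

/-- Iterated residue operation `Res_{z₁=0,∞} ⋯ Res_{z_r=0,∞}`, taking the innermost
residue in the last variable first. -/
noncomputable def iterRes : (r : ℕ) → ((Fin r → ℂ) → ℂ) → ℂ
  | 0, F => F (fun i => i.elim0)
  | r + 1, F => iterRes r (fun z => res0inf (fun w => F (Fin.snoc z w)))

/-- The factor of `M_{k,l}` corresponding to one variable `z`, including `dz/z`. -/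
noncomputable def Mfac {k l : ℕ} (α : Fin k → ℂ) (β : Fin l → ℂ) (z : ℂ) : ℂ :=
  (∏ i, (1 - z * β i)) / ((∏ i, (1 - z * α i)) * (1 - z) ^ ((l : ℤ) - (k : ℤ))) * z⁻¹

/-- The integrand of the iterated-residue formula for the Grothendieck polynomial `g_I`. -/
noncomputable def gInt {r k l : ℕ} (I : Fin r → ℤ) (α : Fin k → ℂ) (β : Fin l → ℂ)
    (z : Fin r → ℂ) : ℂ :=
  (∏ j, (1 - z j) ^ (I j - ((j : ℕ) : ℤ) - 1)) *
  (∏ i, ∏ j ∈ Finset.univ.filter (fun j => j < i), (1 - z i / z j)) *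
  ∏ j, Mfac α β (z j)

/-- The Grothendieck polynomial `g_I(α;β)` in iterated residue form, for an integer
sequence `I` given as a list. -/
noncomputable def gRes {k l : ℕ} (I : List ℤ) (α : Fin k → ℂ) (β : Fin l → ℂ) : ℂ :=
  iterRes I.length (gInt (fun j => I.get j) α β)


open Metric in
lemma residue_mul_inv (h : ℂ → ℂ) (δ : ℝ) (hδ : 0 < δ)
    (hd : DifferentiableOn ℂ h (closedBall 0 δ)) :
    residue (fun w => h w * w⁻¹) 0 = h 0 := by
  unfold residue
  apply Filter.Tendsto.limUnder_eq
  apply Filter.Tendsto.congr' _ (tendsto_const_nhds (x := h 0))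
  filter_upwards [Ioc_mem_nhdsGT_of_mem ⟨le_refl (0:ℝ), hδ⟩] with ε hε
  have hd' : DifferentiableOn ℂ h (closedBall 0 ε) :=
    hd.mono (closedBall_subset_closedBall hε.2)
  have := hd'.circleIntegral_sub_inv_smul (w := 0) (mem_ball_self hε.1)
  have hfun : (fun w : ℂ => h w * w⁻¹) = fun z => (z - 0)⁻¹ • h z := by
    funext z; simp [smul_eq_mul, mul_comm]
  rw [hfun, this, smul_eq_mul, ← mul_assoc,
    inv_mul_cancel₀ Complex.two_pi_I_ne_zero, one_mul]

open Metric in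
lemma residue_zero_of (f G : ℂ → ℂ) (δ : ℝ) (hδ : 0 < δ)
    (hd : DifferentiableOn ℂ G (closedBall 0 δ))
    (hfg : ∀ w : ℂ, w ≠ 0 → w ∈ closedBall (0:ℂ) δ → f w = G w) :
    residue f 0 = 0 := by
  unfold residue
  apply Filter.Tendsto.limUnder_eq
  apply Filter.Tendsto.congr' _ (tendsto_const_nhds (x := (0:ℂ)))
  filter_upwards [Ioc_mem_nhdsGT_of_mem ⟨le_refl (0:ℝ), hδ⟩] with ε hε
  have h1 : circleIntegral f 0 ε = circleIntegral G 0 ε := by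
    unfold circleIntegral
    apply intervalIntegral.integral_congr
    intro θ _
    have hmem : circleMap 0 ε θ ∈ closedBall (0:ℂ) δ := by
      simpa [Complex.dist_eq, abs_of_pos hε.1] using
        (le_trans (le_of_eq (norm_circleMap_zero ε θ)) (by rw [abs_of_pos hε.1]; exact hε.2))
    have hne : circleMap 0 ε θ ≠ 0 := circleMap_ne_center (ne_of_gt hε.1)
    simp only [hfg _ hne hmem]
  have h2 : circleIntegral G 0 ε = 0 := by
    apply Complex.circleIntegral_eq_zero_of_differentiable_on_off_countable hε.1.le
      Set.countable_empty
      ((hd.mono (closedBall_subset_closedBall hε.2)).continuousOn)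
    intro z hz
    exact hd.differentiableAt (Metric.closedBall_mem_nhds_of_mem
      (ball_subset_ball hε.2 hz.1))
  rw [h1, h2, mul_zero]

open Metric in
lemma key0 {k l n : ℕ} (α : Fin k → ℂ) (β : Fin l → ℂ) (hα : ∀ i, α i ≠ 0)
    (z : Fin n → ℂ) (p : ℤ) (c : ℂ) :
    residue (fun w => c * ((1 - w) ^ (p - ((n : ℤ) + 1)) * (∏ i, (1 - w / z i)) *
      Mfac α β w)) 0 = c := by
  set S : Set ℂ := {w | (1:ℂ) - w ≠ 0 ∧ (∏ i, (1 - w * α i)) ≠ 0} with hS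
  have hSopen : IsOpen S := by
    apply IsOpen.inter
    · exact isOpen_compl_singleton.preimage (continuous_const.sub continuous_id)
    · exact isOpen_compl_singleton.preimage (by
        apply continuous_finset_prod
        intro i _
        exact continuous_const.sub (continuous_id.mul continuous_const))
  have h0S : (0:ℂ) ∈ S := by simp [hS]
  obtain ⟨δ, hδ, hball⟩ := Metric.nhds_basis_closedBall.mem_iff.mp (hSopen.mem_nhds h0S)
  set h : ℂ → ℂ := fun w => c * ((1 - w) ^ (p - ((n : ℤ) + 1)) * (∏ i, (1 - w / z i)) *
      ((∏ i, (1 - w * β i)) / ((∏ i, (1 - w * α i)) * (1 - w) ^ ((l : ℤ) - (k : ℤ))))) with hh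
  have hfun : (fun w => c * ((1 - w) ^ (p - ((n : ℤ) + 1)) * (∏ i, (1 - w / z i)) *
      Mfac α β w)) = fun w => h w * w⁻¹ := by
    funext w; simp only [hh, Mfac]; ring
  rw [hfun, residue_mul_inv h δ hδ]
  · simp [hh]
  · intro w hw
    have hwS : w ∈ S := hball hw
    obtain ⟨hw1, hwα⟩ := hwS
    apply DifferentiableAt.differentiableWithinAt
    apply DifferentiableAt.const_mul
    apply DifferentiableAt.mul
    apply DifferentiableAt.mul
    · exact DifferentiableAt.comp w (differentiableAt_zpow.mpr (Or.inl hw1))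
        ((differentiableAt_const _).sub differentiableAt_id)
    · apply DifferentiableAt.fun_finsetProd
      intro i _
      exact (differentiableAt_const _).sub (differentiableAt_id.div_const _)
    · apply DifferentiableAt.div
      · apply DifferentiableAt.fun_finsetProd
        intro i _
        exact (differentiableAt_const _).sub (differentiableAt_id.mul_const _)
      · apply DifferentiableAt.mul
        · apply DifferentiableAt.fun_finsetProd
          intro i _
          exact (differentiableAt_const _).sub (differentiableAt_id.mul_const _)
        · exact DifferentiableAt.comp w (differentiableAt_zpow.mpr (Or.inl hw1))
            ((differentiableAt_const _).sub differentiableAt_id)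
      · exact mul_ne_zero hwα (zpow_ne_zero _ hw1)

open Metric in
lemma keyInf {k l n : ℕ} (α : Fin k → ℂ) (β : Fin l → ℂ) (hα : ∀ i, α i ≠ 0)
    (z : Fin n → ℂ) (p : ℤ) (hp : p ≤ 0) (c : ℂ) :
    resInf (fun w => c * ((1 - w) ^ (p - ((n : ℤ) + 1)) * (∏ i, (1 - w / z i)) *
      Mfac α β w)) = 0 := by
  set a : ℕ := ((n : ℤ) + 1 - p).toNat with hadef
  set b : ℕ := (-p).toNat with hbdef
  have ha : (a : ℤ) = (n : ℤ) + 1 - p := Int.toNat_of_nonneg (by omega)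
  have hb : (b : ℤ) = -p := Int.toNat_of_nonneg (by omega)
  have hab : a = b + n + 1 := by omega
  set T : Set ℂ := {w : ℂ | w - 1 ≠ 0 ∧ (∏ i, (w - α i)) ≠ 0} with hT
  have hTopen : IsOpen T := by
    apply IsOpen.inter
    · exact isOpen_compl_singleton.preimage (continuous_id.sub continuous_const)
    · exact isOpen_compl_singleton.preimage (by
        apply continuous_finset_prod
        intro i _
        exact continuous_id.sub continuous_const)
  have h0T : (0:ℂ) ∈ T := by
    constructor
    · simp
    · simp only [zero_sub]
      exact Finset.prod_ne_zero_iff.mpr (fun i _ => neg_ne_zero.mpr (hα i))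
  obtain ⟨δ, hδ, hball⟩ := Metric.nhds_basis_closedBall.mem_iff.mp (hTopen.mem_nhds h0T)
  set G : ℂ → ℂ := fun w => c * (((w - 1) ^ a)⁻¹ * (∏ i, (w - (z i)⁻¹)) *
      ((∏ i, (w - β i)) / ((∏ i, (w - α i)) * ((w - 1) ^ l / (w - 1) ^ k))) * w ^ b) with hG
  unfold resInf
  rw [residue_zero_of _ G δ hδ, neg_zero]
  · -- differentiability of G
    intro w hw
    obtain ⟨hw1, hwα⟩ := hball hw
    apply DifferentiableAt.differentiableWithinAt
    apply DifferentiableAt.const_mul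
    apply DifferentiableAt.mul
    apply DifferentiableAt.mul
    apply DifferentiableAt.mul
    · exact ((differentiableAt_id.sub_const _).pow a).inv (pow_ne_zero _ hw1)
    · exact DifferentiableAt.fun_finsetProd (fun i _ => differentiableAt_id.sub_const _)
    · apply DifferentiableAt.div
      · exact DifferentiableAt.fun_finsetProd (fun i _ => differentiableAt_id.sub_const _)
      · exact (DifferentiableAt.fun_finsetProd (fun i _ => differentiableAt_id.sub_const _)).mul
          (((differentiableAt_id.sub_const _).pow l).div
            ((differentiableAt_id.sub_const _).pow k) (pow_ne_zero _ hw1))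
      · exact mul_ne_zero hwα (div_ne_zero (pow_ne_zero _ hw1) (pow_ne_zero _ hw1))
    · exact differentiableAt_id.pow b
  · -- equality on punctured ball
    intro w hw hmem
    obtain ⟨hw1, hwα⟩ := hball hmem
    have hwi : w⁻¹ ≠ 0 := inv_ne_zero hw
    have hfac : ∀ d : ℂ, (1:ℂ) - w⁻¹ * d = (w - d) * w⁻¹ := by
      intro d; rw [sub_mul, mul_inv_cancel₀ hw, mul_comm w⁻¹ d]
    have h1 : (1:ℂ) - w⁻¹ = (w - 1) * w⁻¹ := by
      simpa using hfac 1
    have hB : (∏ i, (1 - w⁻¹ / z i)) = (∏ i, (w - (z i)⁻¹)) * (w⁻¹) ^ n := by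
      rw [show (∏ i, (1 - w⁻¹ / z i)) = ∏ i, ((w - (z i)⁻¹) * w⁻¹) from
        Finset.prod_congr rfl (fun i _ => by rw [div_eq_mul_inv]; exact hfac _),
        Finset.prod_mul_distrib, Finset.prod_const, card_univ, Fintype.card_fin]
    have hC : (∏ i, (1 - w⁻¹ * β i)) = (∏ i, (w - β i)) * (w⁻¹) ^ l := by
      rw [show (∏ i, (1 - w⁻¹ * β i)) = ∏ i, ((w - β i) * w⁻¹) from
        Finset.prod_congr rfl (fun i _ => hfac _),
        Finset.prod_mul_distrib, Finset.prod_const, card_univ, Fintype.card_fin]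
    have hD : (∏ i, (1 - w⁻¹ * α i)) = (∏ i, (w - α i)) * (w⁻¹) ^ k := by
      rw [show (∏ i, (1 - w⁻¹ * α i)) = ∏ i, ((w - α i) * w⁻¹) from
        Finset.prod_congr rfl (fun i _ => hfac _),
        Finset.prod_mul_distrib, Finset.prod_const, card_univ, Fintype.card_fin]
    have hE : (1 - w⁻¹) ^ ((l : ℤ) - (k : ℤ)) =
        ((w - 1) ^ l / (w - 1) ^ k) * ((w⁻¹) ^ l / (w⁻¹) ^ k) := by
      rw [h1, mul_zpow, zpow_sub₀ hw1, zpow_sub₀ hwi, zpow_natCast, zpow_natCast,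
        zpow_natCast, zpow_natCast]
    have hwi2 : (w⁻¹ : ℂ) ^ l ≠ 0 := pow_ne_zero _ hwi
    have hM : Mfac α β w⁻¹ = (∏ i, (w - β i)) /
        ((∏ i, (w - α i)) * ((w - 1) ^ l / (w - 1) ^ k)) * w := by
      have hden : ((∏ i, (w - α i)) * (w⁻¹) ^ k) *
          ((w - 1) ^ l / (w - 1) ^ k * ((w⁻¹) ^ l / (w⁻¹) ^ k)) =
          ((∏ i, (w - α i)) * ((w - 1) ^ l / (w - 1) ^ k)) * (w⁻¹) ^ l := by
        field_simp
      rw [Mfac, hC, hD, hE, inv_inv, hden, mul_div_mul_right _ _ hwi2]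
    have hA : ((1:ℂ) - w⁻¹) ^ (p - ((n : ℤ) + 1)) = ((w - 1) ^ a)⁻¹ * w ^ a := by
      have he : p - ((n : ℤ) + 1) = -(a : ℤ) := by omega
      rw [he, zpow_neg, zpow_natCast, h1, mul_pow, mul_inv, inv_pow, inv_inv]
    have hpow : w ^ a * (w⁻¹) ^ n * w * ((w ^ 2)⁻¹) = w ^ b := by
      rw [hab, inv_pow]
      field_simp
      ring
    beta_reduce
    rw [hA, hB, hM, hG]
    linear_combination (c * ((w - 1) ^ a)⁻¹ * (∏ i, (w - (z i)⁻¹)) *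
      ((∏ i, (w - β i)) / ((∏ i, (w - α i)) * ((w - 1) ^ l / (w - 1) ^ k)))) * hpow

lemma prod_filter_castSucc {m : ℕ} (t : ℕ) (ht : t ≤ m) (g : Fin (m+1) → ℂ) :
    ∏ j ∈ univ.filter (fun j : Fin (m+1) => (j : ℕ) < t), g j
      = ∏ j ∈ univ.filter (fun j : Fin m => (j : ℕ) < t), g j.castSucc := by
  have hmap : (univ.filter (fun j : Fin m => (j : ℕ) < t)).map Fin.castSuccEmb
      = univ.filter (fun j : Fin (m+1) => (j : ℕ) < t) := by
    ext j
    simp only [Finset.mem_map, Finset.mem_filter, Finset.mem_univ, true_and,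
      Fin.castSuccEmb, Function.Embedding.coeFn_mk]
    constructor
    · rintro ⟨j₀, hj₀, rfl⟩
      simpa using hj₀
    · intro hj
      exact ⟨⟨j.val, lt_of_lt_of_le hj ht⟩, hj, by ext; simp⟩
  rw [← hmap, Finset.prod_map]
  rfl

lemma gInt_snoc {m k l : ℕ} (I : Fin (m+1) → ℤ) (α : Fin k → ℂ) (β : Fin l → ℂ)
    (z : Fin m → ℂ) (w : ℂ) :
    gInt I α β (Fin.snoc z w) = gInt (fun j => I j.castSucc) α β z *
      ((1 - w) ^ (I (Fin.last m) - ((m : ℤ) + 1)) * (∏ i, (1 - w / z i)) * Mfac α β w) := by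
  unfold gInt
  set Z : Fin (m+1) → ℂ := Fin.snoc z w with hZ
  simp only [Fin.prod_univ_castSucc]
  simp only [hZ, Fin.snoc_castSucc, Fin.snoc_last, Fin.coe_castSucc, Fin.val_last]
  have h2 : ∀ i₀ : Fin m,
      (∏ j ∈ Finset.univ.filter (fun j : Fin (m+1) => j < i₀.castSucc),
        (1 - z i₀ / (Fin.snoc z w : Fin (m+1) → ℂ) j))
      = ∏ j ∈ Finset.univ.filter (fun j : Fin m => j < i₀), (1 - z i₀ / z j) := by
    intro i₀
    have : (Finset.univ.filter (fun j : Fin (m+1) => j < i₀.castSucc))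
        = Finset.univ.filter (fun j : Fin (m+1) => (j : ℕ) < (i₀ : ℕ)) := by
      apply Finset.filter_congr
      intro j _
      exact Iff.rfl
    rw [this, prod_filter_castSucc _ (le_of_lt i₀.isLt)]
    simp only [Fin.snoc_castSucc]
    apply Finset.prod_congr _ (fun _ _ => rfl)
    apply Finset.filter_congr
    intro j _
    exact Iff.rfl
  have h3 : (∏ j ∈ Finset.univ.filter (fun j : Fin (m+1) => j < Fin.last m),
        (1 - w / (Fin.snoc z w : Fin (m+1) → ℂ) j))
      = ∏ i, (1 - w / z i) := by
    have : (Finset.univ.filter (fun j : Fin (m+1) => j < Fin.last m))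
        = Finset.univ.filter (fun j : Fin (m+1) => (j : ℕ) < m) := by
      apply Finset.filter_congr
      intro j _
      exact Iff.rfl
    rw [this, prod_filter_castSucc _ le_rfl]
    simp only [Fin.snoc_castSucc]
    rw [Finset.filter_true_of_mem (fun j _ => j.isLt)]
  rw [Finset.prod_congr rfl (fun i₀ _ => h2 i₀), h3]
  rw [show I (Fin.last m) - (m : ℤ) - 1 = I (Fin.last m) - ((m : ℤ) + 1) by ring]
  ring

lemma iterRes_succ (r : ℕ) (F : (Fin (r+1) → ℂ) → ℂ) :
    iterRes (r+1) F = iterRes r (fun z => res0inf (fun w => F (Fin.snoc z w))) := rfl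

lemma iterRes_cast {r s : ℕ} (h : r = s) (F : (Fin r → ℂ) → ℂ) :
    iterRes r F = iterRes s (fun z => F (fun i => z (Fin.cast h i))) := by
  subst h; rfl

lemma gInt_cast {r s k l : ℕ} (h : r = s) (I : Fin r → ℤ) (α : Fin k → ℂ) (β : Fin l → ℂ) :
    (fun z : Fin s → ℂ => gInt I α β (fun i => z (Fin.cast h i)))
      = gInt (fun j => I (Fin.cast h.symm j)) α β := by
  subst h; rfl

/-- For `p ≤ 0` one has `g_{I,p} = g_I`.  The key computation: with `n` outer variables
`z₁,…,z_n` fixed (nonzero), the residue at `z_{n+1} = 0` of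
`(1-z_{n+1})^{p-(n+1)} ∏ᵢ(1 - z_{n+1}/zᵢ) · M_{k,l}(z_{n+1}) dz_{n+1}/z_{n+1}` equals `1`,
while the residue of the same form at `z_{n+1} = ∞` vanishes. -/
theorem stmt10 :
    (∀ (k l : ℕ) (α : Fin k → ℂ) (β : Fin l → ℂ), (∀ i, α i ≠ 0) → (∀ i, β i ≠ 0) →
      ∀ (I : List ℤ) (p : ℤ), p ≤ 0 → gRes (I ++ [p]) α β = gRes I α β) ∧
    (∀ (k l : ℕ) (α : Fin k → ℂ) (β : Fin l → ℂ), (∀ i, α i ≠ 0) → (∀ i, β i ≠ 0) →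
      ∀ (n : ℕ) (z : Fin n → ℂ) (p : ℤ), (∀ i, z i ≠ 0) → p ≤ 0 →
      residue (fun w => (1 - w) ^ (p - ((n : ℤ) + 1)) * (∏ i, (1 - w / z i)) * Mfac α β w) 0
          = 1 ∧
      resInf (fun w => (1 - w) ^ (p - ((n : ℤ) + 1)) * (∏ i, (1 - w / z i)) * Mfac α β w)
          = 0) := by
  constructor
  · intro k l α β hα hβ I p hp
    have hlen : (I ++ [p]).length = I.length + 1 := by simp
    rw [gRes, iterRes_cast hlen, gInt_cast hlen]
    set J : Fin (I.length + 1) → ℤ :=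
      fun j => (I ++ [p]).get (Fin.cast hlen.symm j) with hJ
    have hJlast : J (Fin.last I.length) = p := by
      simp only [hJ, List.get_eq_getElem, Fin.cast, Fin.val_last]
      simp
    have hJcast : (fun j : Fin I.length => J j.castSucc) = fun j => I.get j := by
      funext j
      simp only [hJ, List.get_eq_getElem, Fin.cast, Fin.coe_castSucc]
      exact List.getElem_append_left j.isLt
    rw [iterRes_succ]
    have hstep : ∀ z : Fin I.length → ℂ,
        res0inf (fun w => gInt J α β (Fin.snoc z w))
          = gInt (fun j => I.get j) α β z := by
      intro z
      have hsn : (fun w => gInt J α β (Fin.snoc z w))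
          = fun w => gInt (fun j => J j.castSucc) α β z *
            ((1 - w) ^ (J (Fin.last I.length) - ((I.length : ℤ) + 1)) *
              (∏ i, (1 - w / z i)) * Mfac α β w) :=
        funext (fun w => gInt_snoc J α β z w)
      rw [hJlast, hJcast] at hsn
      rw [hsn]
      unfold res0inf
      rw [key0 α β hα z p _, keyInf α β hα z p hp _, add_zero]
    rw [show (fun z => res0inf (fun w => gInt J α β (Fin.snoc z w)))
        = gInt (fun j => I.get j) α β from funext hstep]
    rfl
  · intro k l α β hα hβ n z p hz hp
    constructor
    · simpa using key0 α β hα z p 1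
    · simpa using keyInf α β hα z p hp 1
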